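/- For τ ∈ (0,1) and all complex ζ, η and positive integer N, the function S_N(ζ,η) = Σ_{k=0}^{N−1} (τ/2)^k H_k(ζ) H_k(η) / k! satisfies the Christoffel–Darboux-type identity ∂_ζ S_N(ζ,η) = (2τ/(1−τ²))(η − τζ) S_N(ζ,η) + (2/(1−τ²)) (τ/2)^N (τ H_N(ζ) H_{N−1}(η) − H_{N−1}(ζ) H_N(η)) / (N−1)!. -/

import Mathlib

open Real Finset

/-- The physicists' Hermite polynomial (complex argument)
`H_k(z) = k! Σ_{m=0}^{⌊k/2⌋} (−1)^m (2z)^{k−2m} / (m! (k−2m)!)`. -/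
noncomputable def hermiteHC (k : ℕ) (z : ℂ) : ℂ :=
  (Nat.factorial k : ℂ) * ∑ m ∈ Finset.range (k / 2 + 1),
    (-1) ^ m * (2 * z) ^ (k - 2 * m) /
      ((Nat.factorial m : ℂ) * (Nat.factorial (k - 2 * m) : ℂ))


lemma hermiteHC_zero (z : ℂ) : hermiteHC 0 z = 1 := by simp [hermiteHC]

lemma hermiteHC_one (z : ℂ) : hermiteHC 1 z = 2 * z := by
  simp [hermiteHC]

lemma hermiteHC_rec (k : ℕ) (z : ℂ) :
    hermiteHC (k + 2) z = 2 * z * hermiteHC (k + 1) z - 2 * ((k : ℂ) + 1) * hermiteHC k z := by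
  have hdiv : (k + 2) / 2 + 1 = k / 2 + 2 := by omega
  set A : ℕ → ℂ := fun m => ((k+1).factorial : ℂ) * (((k + 2 - 2*m : ℕ) : ℂ) *
    ((-1)^m * (2*z)^(k+2-2*m) / ((m.factorial : ℂ) * ((k+2-2*m).factorial : ℂ)))) with hA
  set B : ℕ → ℂ := fun m => 2 * ((k+1).factorial : ℂ) * ((m : ℂ) *
    ((-1)^m * (2*z)^(k+2-2*m) / ((m.factorial : ℂ) * ((k+2-2*m).factorial : ℂ)))) with hB
  have hsplit : hermiteHC (k+2) z
      = (∑ m ∈ range (k/2+2), A m) + (∑ m ∈ range (k/2+2), B m) := by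
    rw [hermiteHC, hdiv, Finset.mul_sum, ← Finset.sum_add_distrib]
    refine Finset.sum_congr rfl fun m hm => ?_
    have hm' : 2*m ≤ k+2 := by have := Finset.mem_range.mp hm; omega
    have hfac : (((k+2).factorial : ℕ) : ℂ) = ((k+1).factorial : ℂ) * ((k:ℂ)+2) := by
      rw [show k+2 = (k+1)+1 from rfl, Nat.factorial_succ]; push_cast; ring
    have hcast : ((k + 2 - 2*m : ℕ) : ℂ) = (k:ℂ) + 2 - 2*m := by
      rw [Nat.cast_sub hm']; push_cast; ring
    simp only [hA, hB]
    rw [hfac]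
    have h2 : ((k:ℂ)+2) = ((k+2-2*m : ℕ):ℂ) + 2*m := by rw [hcast]; ring
    rw [h2]; ring
  have hAsum : (∑ m ∈ range (k/2+2), A m) = 2 * z * hermiteHC (k+1) z := by
    have hsub : range ((k+1)/2+1) ⊆ range (k/2+2) := by
      apply Finset.range_subset_range.mpr; omega
    have hvan : ∀ x ∈ range (k/2+2), x ∉ range ((k+1)/2+1) → A x = 0 := by
      intro x hx hx'
      have h1 := Finset.mem_range.mp hx
      have h2 : ¬ (x < (k+1)/2+1) := fun h => hx' (Finset.mem_range.mpr h)
      have h3 : k + 2 - 2*x = 0 := by omega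
      simp only [hA, h3]; simp
    rw [← Finset.sum_subset hsub hvan]
    calc ∑ m ∈ range ((k+1)/2+1), A m
        = ∑ m ∈ range ((k+1)/2+1), (2 * z) * (((k+1).factorial : ℂ) *
            ((-1)^m * (2*z)^(k+1-2*m) / ((m.factorial : ℂ) * ((k+1-2*m).factorial : ℂ)))) := by
          refine Finset.sum_congr rfl fun m hm => ?_
          have hm' : 2*m ≤ k+1 := by have := Finset.mem_range.mp hm; omega
          have he : k+2-2*m = (k+1-2*m)+1 := by omega
          simp only [hA]
          rw [he, pow_succ, Nat.factorial_succ (k+1-2*m), Nat.cast_mul]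
          have hc : ((k+1-2*m+1 : ℕ) : ℂ) ≠ 0 := Nat.cast_ne_zero.mpr (Nat.succ_ne_zero _)
          have cancel : ∀ Y D : ℂ, ((k+1-2*m+1 : ℕ) : ℂ) * (Y / (((k+1-2*m+1 : ℕ) : ℂ) * D)) = Y / D := by
            intro Y D
            rw [mul_div_assoc']
            exact mul_div_mul_left Y D hc
          calc ((k+1).factorial : ℂ) * (((k+1-2*m+1 : ℕ) : ℂ) * ((-1)^m * ((2*z)^(k+1-2*m) * (2*z)) /
                ((m.factorial : ℂ) * (((k+1-2*m+1 : ℕ) : ℂ) * ((k+1-2*m).factorial : ℂ)))))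
              = (2 * z * ((k+1).factorial : ℂ)) * (((k+1-2*m+1 : ℕ) : ℂ) * (((-1)^m * (2*z)^(k+1-2*m)) /
                (((k+1-2*m+1 : ℕ) : ℂ) * ((m.factorial : ℂ) * ((k+1-2*m).factorial : ℂ))))) := by ring
            _ = (2 * z * ((k+1).factorial : ℂ)) * (((-1)^m * (2*z)^(k+1-2*m)) /
                ((m.factorial : ℂ) * ((k+1-2*m).factorial : ℂ))) := by rw [cancel]
            _ = 2 * z * (((k+1).factorial : ℂ) * ((-1)^m * (2*z)^(k+1-2*m) /
                ((m.factorial : ℂ) * ((k+1-2*m).factorial : ℂ)))) := by ring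
      _ = 2 * z * hermiteHC (k+1) z := by
          rw [← Finset.mul_sum, ← Finset.mul_sum, hermiteHC]
  have hBsum : (∑ m ∈ range (k/2+2), B m) = -(2*((k:ℂ)+1)*hermiteHC k z) := by
    rw [Finset.sum_range_succ']
    have hB0 : B 0 = 0 := by simp only [hB]; simp
    rw [hB0, add_zero]
    calc ∑ m ∈ range (k/2+1), B (m+1)
        = ∑ m ∈ range (k/2+1), (-(2*((k:ℂ)+1))) * ((k.factorial : ℂ) *
            ((-1)^m * (2*z)^(k-2*m) / ((m.factorial : ℂ) * ((k-2*m).factorial : ℂ)))) := by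
          refine Finset.sum_congr rfl fun m hm => ?_
          simp only [hB]
          have he : k+2-2*(m+1) = k-2*m := by omega
          rw [he, pow_succ (-1 : ℂ) m, Nat.factorial_succ m, Nat.factorial_succ k]
          have hfne : ((k-2*m).factorial : ℂ) ≠ 0 := Nat.cast_ne_zero.mpr (Nat.factorial_ne_zero _)
          have hmne : ((m.factorial : ℕ) : ℂ) ≠ 0 := Nat.cast_ne_zero.mpr (Nat.factorial_ne_zero _)
          have hene : ((m : ℕ) : ℂ) + 1 ≠ 0 := by
            have : ((m+1 : ℕ) : ℂ) ≠ 0 := Nat.cast_ne_zero.mpr (by omega)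
            push_cast at this; exact this
          push_cast
          field_simp
      _ = -(2*((k:ℂ)+1)*hermiteHC k z) := by
          rw [← Finset.mul_sum, ← Finset.mul_sum, hermiteHC]; ring
  rw [hsplit, hAsum, hBsum]; ring

lemma hermiteHC_rec' (k : ℕ) (z : ℂ) :
    hermiteHC (k + 1) z = 2 * z * hermiteHC k z - 2 * (k : ℂ) * hermiteHC (k - 1) z := by
  cases k with
  | zero => simp [hermiteHC_zero, hermiteHC_one]
  | succ n =>
      have := hermiteHC_rec n z
      push_cast
      simpa using this

lemma hasDerivAt_hermiteHC : ∀ (k : ℕ) (z : ℂ),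
    HasDerivAt (fun x => hermiteHC k x) (2 * (k : ℂ) * hermiteHC (k - 1) z) z := by
  intro k
  induction k using Nat.strong_induction_on with
  | _ k ih =>
    match k with
    | 0 =>
        intro z
        have hf : (fun x => hermiteHC 0 x) = fun _ => (1 : ℂ) := funext hermiteHC_zero
        rw [hf]
        simpa using hasDerivAt_const z (1 : ℂ)
    | 1 =>
        intro z
        have hf : (fun x => hermiteHC 1 x) = fun x => 2 * x := funext hermiteHC_one
        rw [hf]
        have h := (hasDerivAt_id z).const_mul (2 : ℂ)
        simpa [hermiteHC_zero] using h
    | (n+2) =>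
        intro z
        have h1 := ih (n+1) (by omega) z
        have h0 := ih n (by omega) z
        have hf : (fun x => hermiteHC (n+2) x)
            = fun x => 2 * x * hermiteHC (n+1) x - 2 * ((n : ℂ)+1) * hermiteHC n x :=
          funext (hermiteHC_rec n)
        rw [hf]
        have hd : HasDerivAt
            (fun x => 2 * x * hermiteHC (n+1) x - 2 * ((n : ℂ)+1) * hermiteHC n x)
            ((2 * 1) * hermiteHC (n+1) z + (2 * z) * (2 * ((n+1 : ℕ) : ℂ) * hermiteHC ((n+1)-1) z)
              - 2 * ((n : ℂ)+1) * (2 * (n : ℂ) * hermiteHC (n-1) z)) z :=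
          (((hasDerivAt_id z).const_mul (2:ℂ)).mul h1).sub (h0.const_mul _)
        convert hd using 1
        have hr := hermiteHC_rec' n z
        simp only [show n + 2 - 1 = n + 1 from rfl, Nat.add_sub_cancel] at *
        rw [hr]
        push_cast
        ring

lemma fieldAux (t ζ η a b p q S P F ν : ℂ) (h1 : 1 - t^2 ≠ 0) (hF : F ≠ 0) (hν : ν ≠ 0) :
    (2*t/(1-t^2))*(η-t*ζ)*S + (2/(1-t^2))*P*(t*a*q - b*p)/F + P*(2*ν*b)*p/(ν*F)
      = (2*t/(1-t^2))*(η-t*ζ)*(S + P*a*p/(ν*F))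
        + (2/(1-t^2))*(P*(t/2))*(t*(2*ζ*a-2*ν*b)*p - a*(2*η*p-2*ν*q))/(ν*F) := by
  field_simp
  ring

lemma mainAux (τ : ℝ) (hτ : (1 : ℂ) - (τ : ℂ) ^ 2 ≠ 0) (N : ℕ) (hN : 1 ≤ N) (ζ η : ℂ) :
    (∑ k ∈ Finset.range N,
        ((τ : ℂ) / 2) ^ k * (2 * (k : ℂ) * hermiteHC (k-1) ζ) * hermiteHC k η / (Nat.factorial k : ℂ))
      = (2 * (τ : ℂ) / (1 - (τ : ℂ) ^ 2)) * (η - (τ : ℂ) * ζ) *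
          (∑ k ∈ Finset.range N,
            ((τ : ℂ) / 2) ^ k * hermiteHC k ζ * hermiteHC k η / (Nat.factorial k : ℂ))
        + (2 / (1 - (τ : ℂ) ^ 2)) * ((τ : ℂ) / 2) ^ N *
          ((τ : ℂ) * hermiteHC N ζ * hermiteHC (N - 1) η
            - hermiteHC (N - 1) ζ * hermiteHC N η) / (Nat.factorial (N - 1) : ℂ) := by
  induction N, hN using Nat.le_induction with
  | base =>
      rw [Finset.sum_range_one, Finset.sum_range_one]
      norm_num [hermiteHC_zero, hermiteHC_one]
      field_simp
      ring
  | succ n hn ih =>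
      rw [Finset.sum_range_succ, ih, Finset.sum_range_succ]
      simp only [Nat.add_sub_cancel]
      have hfac : ((Nat.factorial n : ℕ) : ℂ) = (n : ℂ) * ((Nat.factorial (n-1) : ℕ) : ℂ) := by
        rw [← Nat.mul_factorial_pred (by omega : n ≠ 0)]
        push_cast
        ring
      have hrζ := hermiteHC_rec' n ζ
      have hrη := hermiteHC_rec' n η
      rw [hrζ, hrη, hfac, pow_succ]
      have hFne : ((Nat.factorial (n-1) : ℕ) : ℂ) ≠ 0 := Nat.cast_ne_zero.mpr (Nat.factorial_ne_zero _)
      have hnne : (n : ℂ) ≠ 0 := Nat.cast_ne_zero.mpr (by omega)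
      linear_combination fieldAux (τ : ℂ) ζ η (hermiteHC n ζ) (hermiteHC (n-1) ζ)
        (hermiteHC n η) (hermiteHC (n-1) η)
        (∑ k ∈ Finset.range n,
          ((τ : ℂ) / 2) ^ k * hermiteHC k ζ * hermiteHC k η / (Nat.factorial k : ℂ))
        (((τ : ℂ) / 2) ^ n) ((Nat.factorial (n-1) : ℂ)) ((n : ℂ)) hτ hFne hnne

/-- Christoffel–Darboux-type identity for `S_N(ζ,η) = Σ_{k<N} (τ/2)^k H_k(ζ)H_k(η)/k!`:
`∂_ζ S_N = (2τ/(1−τ²))(η − τζ) S_N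
 + (2/(1−τ²)) (τ/2)^N (τ H_N(ζ)H_{N−1}(η) − H_{N−1}(ζ)H_N(η))/(N−1)!`. -/
theorem stmt_15 (τ : ℝ) (h0 : 0 < τ) (h1 : τ < 1) (N : ℕ) (hN : 1 ≤ N) (ζ η : ℂ) :
    deriv (fun x : ℂ =>
        ∑ k ∈ Finset.range N,
          ((τ : ℂ) / 2) ^ k * hermiteHC k x * hermiteHC k η / (Nat.factorial k : ℂ)) ζ
      = (2 * (τ : ℂ) / (1 - (τ : ℂ) ^ 2)) * (η - (τ : ℂ) * ζ) *
          (∑ k ∈ Finset.range N,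
            ((τ : ℂ) / 2) ^ k * hermiteHC k ζ * hermiteHC k η / (Nat.factorial k : ℂ))
        + (2 / (1 - (τ : ℂ) ^ 2)) * ((τ : ℂ) / 2) ^ N *
          ((τ : ℂ) * hermiteHC N ζ * hermiteHC (N - 1) η
            - hermiteHC (N - 1) ζ * hermiteHC N η) / (Nat.factorial (N - 1) : ℂ) := by
  have hτ : (1 : ℂ) - (τ : ℂ) ^ 2 ≠ 0 := by
    intro h
    have h2 : ((τ : ℂ)) ^ 2 = 1 := by linear_combination -h
    have h3 : (τ : ℝ) ^ 2 = 1 := by exact_mod_cast h2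
    nlinarith
  have hD : HasDerivAt (fun x : ℂ =>
        ∑ k ∈ Finset.range N,
          ((τ : ℂ) / 2) ^ k * hermiteHC k x * hermiteHC k η / (Nat.factorial k : ℂ))
      (∑ k ∈ Finset.range N,
          ((τ : ℂ) / 2) ^ k * (2 * (k : ℂ) * hermiteHC (k-1) ζ) * hermiteHC k η / (Nat.factorial k : ℂ)) ζ := by
    apply HasDerivAt.fun_sum
    intro k hk
    exact (((hasDerivAt_hermiteHC k ζ).const_mul (((τ : ℂ) / 2) ^ k)).mul_const
      (hermiteHC k η)).div_const (Nat.factorial k : ℂ)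
  rw [hD.deriv]
  exact mainAux τ hτ N hN ζ η
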